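/- Let S be a symmetric n×n matrix over a field C of characteristic zero. The map from pairs (v, A), with v ∈ C^n and A a skewsymmetric n×n matrix, to (v, AS) ∈ C^n × so(n,S) is injective (restricted to its image in so(n,S)) and bijective onto C^n × so(n,S) if and only if S has rank n or n−1. -/

import Mathlib

open Matrix

section Aux

variable {C : Type} [Field C] [CharZero C] {n : ℕ}

private lemma aux_self_neg {a : C} (h : a = -a) : a = 0 := by
  have h2 : (2 : C) * a = 0 := by linear_combination h
  rcases mul_eq_zero.mp h2 with h' | h'
  · exact absurd h' two_ne_zero
  · exact h'

omit [CharZero C] in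
private lemma conj_skew (Q A : Matrix (Fin n) (Fin n) C) (hA : Aᵀ = -A) :
    (Q * A * Qᵀ)ᵀ = -(Q * A * Qᵀ) := by
  rw [Matrix.transpose_mul, Matrix.transpose_mul, Matrix.transpose_transpose, hA]
  simp [Matrix.mul_assoc, Matrix.neg_mul, Matrix.mul_neg]

/-- Injectivity in the diagonal case (kernel form). -/
private lemma diag_ker (d : Fin n → C) (hone : ∀ i j, d i = 0 → d j = 0 → i = j)
    (A : Matrix (Fin n) (Fin n) C) (hA : Aᵀ = -A) (h : A * diagonal d = 0) : A = 0 := by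
  have hent : ∀ i j, A i j * d j = 0 := by
    intro i j
    have := congrFun (congrFun h i) j
    simpa [Matrix.mul_diagonal] using this
  have hskew : ∀ i j, A j i = -A i j := by
    intro i j
    have := congrFun (congrFun hA i) j
    simpa [Matrix.transpose_apply] using this
  ext i j
  by_cases hj : d j = 0
  · by_cases hi : d i = 0
    · obtain rfl := hone i j hi hj
      simpa using aux_self_neg (hskew i i)
    · have h1 : A j i * d i = 0 := hent j i
      have h2 : A j i = 0 := by
        rcases mul_eq_zero.mp h1 with h' | h'
        · exact h'
        · exact absurd h' hi
      have := hskew j i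
      simp [h2] at this
      simpa using this
  · have h1 := hent i j
    rcases mul_eq_zero.mp h1 with h' | h'
    · simpa using h'
    · exact absurd h' hj

/-- Surjectivity in the diagonal case. -/
private lemma diag_surj (d : Fin n → C) (hone : ∀ i j, d i = 0 → d j = 0 → i = j)
    (M : Matrix (Fin n) (Fin n) C) (hM : Mᵀ * diagonal d + diagonal d * M = 0)
    (htr : M.trace = 0) : ∃ A, Aᵀ = -A ∧ A * diagonal d = M := by
  classical
  have hrel : ∀ i j, M j i * d j + d i * M i j = 0 := by
    intro i j
    have := congrFun (congrFun hM i) j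
    simpa [Matrix.add_apply, Matrix.mul_diagonal, Matrix.diagonal_mul,
      Matrix.transpose_apply] using this
  have hdiag : ∀ l, d l ≠ 0 → M l l = 0 := by
    intro l hl
    have h1 := hrel l l
    have h2 : (2 : C) * (d l * M l l) = 0 := by linear_combination h1
    rcases mul_eq_zero.mp h2 with h' | h'
    · exact absurd h' two_ne_zero
    · rcases mul_eq_zero.mp h' with h'' | h''
      · exact absurd h'' hl
      · exact h''
  have hcol : ∀ i j, d j = 0 → M i j = 0 := by
    intro i j hj
    by_cases hi : d i = 0
    · obtain rfl := hone i j hi hj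
      have hsum : ∑ l, M l l = M i i := by
        refine Finset.sum_eq_single i (fun l _ hl => ?_) (by simp)
        exact hdiag l (fun h0 => hl (hone l i h0 hi))
      have : M.trace = M i i := by rw [Matrix.trace]; simpa [Matrix.diag] using hsum
      rw [htr] at this
      exact this.symm
    · have h1 := hrel i j
      rw [hj, mul_zero, zero_add] at h1
      rcases mul_eq_zero.mp h1 with h' | h'
      · exact absurd h' hi
      · exact h'
  refine ⟨Matrix.of (fun i j => if d j = 0 then (if d i = 0 then 0 else -(M j i) / d i)
      else M i j / d j), ?_, ?_⟩
  · ext i j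
    simp only [Matrix.transpose_apply, Matrix.neg_apply, Matrix.of_apply]
    by_cases hi : d i = 0 <;> by_cases hj : d j = 0
    · rw [if_pos hi, if_pos hj, if_pos hj, if_pos hi, neg_zero]
    · rw [if_pos hi, if_neg hj, if_neg hj, neg_div]
    · rw [if_neg hi, if_pos hj, if_neg hi, neg_div, neg_neg]
    · rw [if_neg hi, if_neg hj]
      have h1 := hrel i j
      field_simp
      linear_combination h1
  · ext i j
    simp only [Matrix.mul_diagonal, Matrix.of_apply]
    by_cases hj : d j = 0
    · rw [if_pos hj, hj, mul_zero, hcol i j hj]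
    · rw [if_neg hj, div_mul_cancel₀ _ hj]

/-- Diagonalization by congruence of a symmetric matrix. -/
private lemma exists_congr_diagonal (S : Matrix (Fin n) (Fin n) C) (hS : Sᵀ = S) :
    ∃ (P : Matrix (Fin n) (Fin n) C) (d : Fin n → C),
      IsUnit P.det ∧ Pᵀ * S * P = diagonal d := by
  classical
  have h2 : Invertible (2 : C) := invertibleOfNonzero two_ne_zero
  set B : LinearMap.BilinForm C (Fin n → C) := Matrix.toLinearMap₂' C S with hB
  have happ : ∀ x y : Fin n → C, B x y = x ⬝ᵥ S *ᵥ y := fun x y =>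
    Matrix.toLinearMap₂'_apply' S x y
  have hsymm : B.IsSymm := by
    rw [LinearMap.BilinForm.isSymm_def]
    intro x y
    simp only [RingHom.id_apply, happ]
    rw [Matrix.dotProduct_mulVec, ← Matrix.mulVec_transpose, hS,
      dotProduct_comm]
  obtain ⟨v, hv⟩ := LinearMap.BilinForm.exists_orthogonal_basis (LinearMap.BilinForm.isSymm_iff.mp hsymm)
  let w : Module.Basis (Fin n) C (Fin n → C) :=
    v.reindex (finCongr (Module.finrank_fin_fun C))
  have hw : ∀ i j, i ≠ j → B (w i) (w j) = 0 := by
    intro i j hij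
    have : (finCongr (Module.finrank_fin_fun C)).symm i ≠
        (finCongr (Module.finrank_fin_fun C)).symm j := fun h => hij (by
      simpa using congrArg (finCongr (Module.finrank_fin_fun C)) h)
    simpa [w, Module.Basis.reindex_apply] using hv this
  let P : Matrix (Fin n) (Fin n) C := Matrix.of fun a i => w i a
  have hPmat : P = (Pi.basisFun C (Fin n)).toMatrix w := by
    ext a i
    simp [P, Module.Basis.toMatrix_apply, Pi.basisFun_repr]
  have hdet : IsUnit P.det := by
    rw [hPmat]
    have := (Pi.basisFun C (Fin n)).invertibleToMatrix w
    exact isUnit_det_of_invertible _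
  refine ⟨P, fun i => B (w i) (w i), hdet, ?_⟩
  have key : ∀ i j, (Pᵀ * S * P) i j = B (w i) (w j) := by
    intro i j
    rw [happ]
    simp only [Matrix.mul_apply, Matrix.transpose_apply, dotProduct, Matrix.mulVec,
      Matrix.of_apply, P, Finset.sum_mul, Finset.mul_sum]
    rw [Finset.sum_comm]
    exact Finset.sum_congr rfl fun b _ => Finset.sum_congr rfl fun a _ => by ring
  ext i j
  by_cases hij : i = j
  · subst hij; rw [key]; simp
  · rw [key, hw i j hij]; simp [Matrix.diagonal_apply_ne _ hij]

omit [CharZero C] in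
/-- The failure-of-injectivity statement (part 3). -/
private lemma low_rank (S : Matrix (Fin n) (Fin n) C) (hS : Sᵀ = S)
    (h : S.rank + 1 < n) :
    ∃ A : Matrix (Fin n) (Fin n) C, Aᵀ = -A ∧ A ≠ 0 ∧ A * S = 0 := by
  classical
  have hrn : S.rank + Module.finrank C (LinearMap.ker S.mulVecLin) = n := by
    have h1 := LinearMap.finrank_range_add_finrank_ker S.mulVecLin
    rw [Module.finrank_fin_fun] at h1
    exact h1
  have hker2 : 2 ≤ Module.finrank C (LinearMap.ker S.mulVecLin) := by omega
  -- get a nonzero element of the kernel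
  have hpos : 0 < Module.finrank C (LinearMap.ker S.mulVecLin) := by omega
  have hnt : Nontrivial (LinearMap.ker S.mulVecLin) :=
    (Module.finrank_pos_iff (R := C)).mp hpos
  obtain ⟨⟨u, hu_mem⟩, hu0⟩ := exists_ne (0 : LinearMap.ker S.mulVecLin)
  have hu : u ≠ 0 := by simpa [Subtype.ext_iff] using hu0
  -- get an element of the kernel not in the span of u
  have hv : ∃ v, v ∈ LinearMap.ker S.mulVecLin ∧ v ∉ Submodule.span C {u} := by
    by_contra hcon
    push_neg at hcon
    have hle : LinearMap.ker S.mulVecLin ≤ Submodule.span C {u} := fun x hx => hcon x hx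
    have := Submodule.finrank_mono hle
    rw [finrank_span_singleton hu] at this
    omega
  obtain ⟨v, hv_mem, hv_span⟩ := hv
  have hSu : S *ᵥ u = 0 := hu_mem
  have hSv : S *ᵥ v = 0 := hv_mem
  refine ⟨vecMulVec u v - vecMulVec v u, ?_, ?_, ?_⟩
  · ext i j
    simp [Matrix.transpose_apply, Matrix.vecMulVec_apply, Matrix.sub_apply,
      Matrix.neg_apply]
    ring
  · intro h0
    apply hv_span
    obtain ⟨i, hi⟩ := Function.ne_iff.mp hu
    simp only [Pi.zero_apply] at hi
    have hentry : ∀ j, u i * v j = v i * u j := by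
      intro j
      have := congrFun (congrFun h0 i) j
      simpa [Matrix.sub_apply, Matrix.vecMulVec_apply, sub_eq_zero] using this
    refine Submodule.mem_span_singleton.mpr ⟨v i / u i, ?_⟩
    ext j
    have := hentry j
    simp only [Pi.smul_apply, smul_eq_mul]
    field_simp
    linear_combination -this
  · have hmul : ∀ (a b : Fin n → C), S *ᵥ b = 0 → vecMulVec a b * S = 0 := by
      intro a b hb
      ext i k
      have hb' : ∀ k, ∑ j, b j * S j k = 0 := by
        intro k
        have := congrFun hb k
        calc ∑ j, b j * S j k = ∑ j, S k j * b j := by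
              refine Finset.sum_congr rfl fun j _ => ?_
              rw [← congrFun (congrFun hS j) k]
              simp [Matrix.transpose_apply]
              ring
          _ = 0 := this
      simp only [Matrix.mul_apply, Matrix.vecMulVec_apply, Matrix.zero_apply]
      calc ∑ j, a i * b j * S j k = a i * ∑ j, b j * S j k := by
            rw [Finset.mul_sum]; exact Finset.sum_congr rfl fun j _ => by ring
        _ = 0 := by rw [hb' k, mul_zero]
    rw [Matrix.sub_mul, hmul u v hSv, hmul v u hSu, sub_zero]

end Aux

/-- Let `S` be a symmetric n×n matrix over a field `C` of characteristic
zero.  The map `(v, A) ↦ (v, A*S)`, from pairs of a vector `v ∈ C^n` and a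
skewsymmetric matrix `A` to `C^n × so(n,S)`, is well defined (i.e. `A*S ∈ so(n,S)`
for skewsymmetric `A`); since the first component is the identity, it is bijective
onto `C^n × so(n,S)` iff the matrix part `A ↦ A*S` is injective onto `so(n,S)` and
surjective, which happens iff `rank S = n` or `rank S = n − 1`; and it fails to be
injective whenever `rank S < n − 1`. -/
theorem stmt_1 {C : Type} [Field C] [CharZero C] (n : ℕ)
    (S : Matrix (Fin n) (Fin n) C) (hS : Sᵀ = S) :
    (∀ A : Matrix (Fin n) (Fin n) C, Aᵀ = -A →
        (A * S)ᵀ * S + S * (A * S) = 0 ∧ (A * S).trace = 0) ∧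
    (((∀ A B : Matrix (Fin n) (Fin n) C, Aᵀ = -A → Bᵀ = -B → A * S = B * S → A = B) ∧
      (∀ M : Matrix (Fin n) (Fin n) C, Mᵀ * S + S * M = 0 → M.trace = 0 →
        ∃ A, Aᵀ = -A ∧ A * S = M)) ↔ (S.rank = n ∨ S.rank + 1 = n)) ∧
    (S.rank + 1 < n →
      ∃ A : Matrix (Fin n) (Fin n) C, Aᵀ = -A ∧ A ≠ 0 ∧ A * S = 0) := by
  classical
  refine ⟨?_, ?_, low_rank S hS⟩
  · intro A hA
    constructor
    · rw [Matrix.transpose_mul, hS, hA]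
      noncomm_ring
    · have h1 : (A * S).trace = (A * S)ᵀ.trace := (Matrix.trace_transpose _).symm
      rw [Matrix.transpose_mul, hS, hA] at h1
      have h2 : (S * -A).trace = -(A * S).trace := by
        rw [Matrix.trace_mul_comm]
        simp
      rw [h2] at h1
      exact aux_self_neg h1
  · constructor
    · -- forward: injectivity+surjectivity → rank condition
      rintro ⟨hinj, _⟩
      by_contra hcon
      push_neg at hcon
      obtain ⟨h1, h2⟩ := hcon
      have hle : S.rank ≤ n := le_trans S.rank_le_card_width (by simp)
      have hlt : S.rank + 1 < n := by omega
      obtain ⟨A, hA, hA0, hAS⟩ := low_rank S hS hlt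
      exact hA0 (hinj A 0 hA (by simp) (by simp [hAS]))
    · -- backward: rank condition → injectivity+surjectivity
      intro hrk
      obtain ⟨P, d, hdet, hdiag⟩ := exists_congr_diagonal S hS
      have hdetT : IsUnit Pᵀ.det := by rwa [Matrix.det_transpose]
      have hPQ : P * P⁻¹ = 1 := Matrix.mul_nonsing_inv P hdet
      have hQP : P⁻¹ * P = 1 := Matrix.nonsing_inv_mul P hdet
      have hQTPT : (P⁻¹)ᵀ * Pᵀ = 1 := by
        rw [← Matrix.transpose_mul, hPQ, Matrix.transpose_one]
      have hPTQT : Pᵀ * (P⁻¹)ᵀ = 1 := by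
        rw [← Matrix.transpose_mul, hQP, Matrix.transpose_one]
      -- rank of diagonal d equals rank S
      have hrkd : (diagonal d).rank = S.rank := by
        rw [← hdiag]
        rw [Matrix.rank_mul_eq_left_of_isUnit_det P (Pᵀ * S) hdet,
          Matrix.rank_mul_eq_right_of_isUnit_det Pᵀ S hdetT]
      have hone : ∀ i j, d i = 0 → d j = 0 → i = j := by
        intro i j hi hj
        by_contra hij
        have hcard : (diagonal d).rank = Fintype.card {i // d i ≠ 0} :=
          Matrix.rank_diagonal d
        have hsplit : Fintype.card {i // d i ≠ 0} + Fintype.card {i // d i = 0} = n := by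
          have hpart := Finset.card_filter_add_card_filter_not
            (s := (Finset.univ : Finset (Fin n))) (p := fun i => d i = 0)
          have hc1 : Fintype.card {i // d i ≠ 0} =
              (Finset.univ.filter (fun i : Fin n => ¬ d i = 0)).card :=
            Fintype.card_subtype _
          have hc0 : Fintype.card {i // d i = 0} =
              (Finset.univ.filter (fun i : Fin n => d i = 0)).card :=
            Fintype.card_subtype _
          simp only [Finset.card_univ, Fintype.card_fin] at hpart
          omega
        have h2le : 2 ≤ Fintype.card {i // d i = 0} := by
          have : (⟨i, hi⟩ : {i // d i = 0}) ≠ ⟨j, hj⟩ := fun h =>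
            hij (congrArg Subtype.val h)
          have hnt : Nontrivial {i // d i = 0} := ⟨_, _, this⟩
          exact Fintype.one_lt_card_iff_nontrivial.mpr hnt
        rw [← hcard, hrkd] at hsplit
        omega
      constructor
      · intro A B hA hB hAB
        have hsub : (A - B) * S = 0 := by
          rw [Matrix.sub_mul, hAB, sub_self]
        set A' := P⁻¹ * (A - B) * (P⁻¹)ᵀ with hA'
        have hABskew : (A - B)ᵀ = -(A - B) := by
          rw [Matrix.transpose_sub, hA, hB]; abel
        have hA'skew : A'ᵀ = -A' := conj_skew P⁻¹ (A - B) hABskew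
        have hA'D : A' * diagonal d = 0 := by
          rw [hA', ← hdiag]
          calc P⁻¹ * (A - B) * (P⁻¹)ᵀ * (Pᵀ * S * P)
              = P⁻¹ * (A - B) * ((P⁻¹)ᵀ * Pᵀ) * (S * P) := by
                simp only [Matrix.mul_assoc]
            _ = P⁻¹ * ((A - B) * S) * P := by rw [hQTPT]; simp only [Matrix.mul_assoc, Matrix.one_mul]
            _ = 0 := by rw [hsub]; simp
        have hA'0 : A' = 0 := diag_ker d hone A' hA'skew hA'D
        have : A - B = 0 := by
          have h3 : P * A' * Pᵀ = A - B := by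
            rw [hA']
            calc P * (P⁻¹ * (A - B) * (P⁻¹)ᵀ) * Pᵀ
                = (P * P⁻¹) * (A - B) * ((P⁻¹)ᵀ * Pᵀ) := by simp only [Matrix.mul_assoc]
              _ = A - B := by rw [hPQ, hQTPT]; simp
          rw [← h3, hA'0]; simp
        exact sub_eq_zero.mp this
      · intro M hM htr
        set M' := P⁻¹ * M * P with hM'
        have hM'eq : M'ᵀ * diagonal d + diagonal d * M' = 0 := by
          rw [hM', ← hdiag]
          have : (P⁻¹ * M * P)ᵀ = Pᵀ * Mᵀ * (P⁻¹)ᵀ := by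
            rw [Matrix.transpose_mul, Matrix.transpose_mul]
            simp only [Matrix.mul_assoc]
          rw [this]
          calc Pᵀ * Mᵀ * (P⁻¹)ᵀ * (Pᵀ * S * P) + Pᵀ * S * P * (P⁻¹ * M * P)
              = Pᵀ * Mᵀ * ((P⁻¹)ᵀ * Pᵀ) * (S * P) + Pᵀ * S * (P * P⁻¹) * (M * P) := by
                simp only [Matrix.mul_assoc]
            _ = Pᵀ * (Mᵀ * S + S * M) * P := by
                rw [hQTPT, hPQ]
                simp only [Matrix.mul_one, Matrix.add_mul, Matrix.mul_add, Matrix.mul_assoc]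
            _ = 0 := by rw [hM]; simp
        have htr' : M'.trace = 0 := by
          rw [hM', Matrix.trace_mul_comm, ← Matrix.mul_assoc, hPQ, Matrix.one_mul, htr]
        obtain ⟨A', hA'skew, hA'D⟩ := diag_surj d hone M' hM'eq htr'
        refine ⟨P * A' * Pᵀ, conj_skew P A' hA'skew, ?_⟩
        · have hPS : Pᵀ * S = diagonal d * P⁻¹ := by
            rw [← hdiag]
            calc Pᵀ * S = Pᵀ * S * (P * P⁻¹) := by rw [hPQ, Matrix.mul_one]
              _ = Pᵀ * S * P * P⁻¹ := by simp only [Matrix.mul_assoc]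
          calc P * A' * Pᵀ * S = P * A' * (diagonal d * P⁻¹) := by
                rw [Matrix.mul_assoc (P * A') Pᵀ S, hPS]
            _ = P * (A' * diagonal d) * P⁻¹ := by simp only [Matrix.mul_assoc]
            _ = P * (P⁻¹ * M * P) * P⁻¹ := by rw [hA'D, hM']
            _ = M := by
                calc P * (P⁻¹ * M * P) * P⁻¹ = (P * P⁻¹) * M * (P * P⁻¹) := by
                      simp only [Matrix.mul_assoc]
                  _ = M := by rw [hPQ]; simp
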